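/- Let M be a geodesic metric space, N a metric space, and (Z_i)_{i∈ℕ} a countable family of sets covering M. If f : M → N is continuous and its restriction to each Z_i is Lipschitz with constant at most L, then f is Lipschitz with constant at most L. -/

import Mathlib

open Metric Set Filter

/-- Local-to-global: if every point of `[u,v]` has a neighborhood (within `I`) on which
`g` satisfies the `C`-Lipschitz estimate, then `dist (g u) (g v) ≤ C * (v - u)`. -/
lemma aux_LG {N : Type*} [MetricSpace N] {g : ℝ → N} {I : Set ℝ} (hIOC : I.OrdConnected)
    {C : ℝ} {u v : ℝ} (hu : u ∈ I) (hv : v ∈ I) (huv : u ≤ v)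
    (hgood : ∀ t ∈ Set.Icc u v, ∃ ε > 0, ∀ p ∈ I, ∀ q ∈ I,
      |p - t| < ε → |q - t| < ε → dist (g p) (g q) ≤ C * |q - p|) :
    dist (g u) (g v) ≤ C * (v - u) := by
  set S : Set ℝ := {t | t ∈ Set.Icc u v ∧ dist (g u) (g t) ≤ C * (t - u)} with hSdef
  have huS : u ∈ S := ⟨⟨le_refl u, huv⟩, by simp⟩
  have hSne : S.Nonempty := ⟨u, huS⟩
  have hSbdd : BddAbove S := ⟨v, fun t ht => ht.1.2⟩
  set c := sSup S with hc
  have hcmem : c ∈ Set.Icc u v := ⟨le_csSup hSbdd huS, csSup_le hSne fun t ht => ht.1.2⟩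
  have hcI : c ∈ I := hIOC.out hu hv hcmem
  obtain ⟨ε, hε, hgc⟩ := hgood c hcmem
  have hcS : c ∈ S := by
    obtain ⟨t', ht'S, ht'⟩ := exists_lt_of_lt_csSup hSne (show c - ε < c by linarith)
    have ht'c : t' ≤ c := le_csSup hSbdd ht'S
    have ht'I : t' ∈ I := hIOC.out hu hv ht'S.1
    have h1 : dist (g t') (g c) ≤ C * |c - t'| := by
      apply hgc t' ht'I c hcI _ (by simpa using hε)
      rw [abs_sub_comm, abs_of_nonneg (by linarith)]
      linarith
    rw [abs_of_nonneg (by linarith)] at h1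
    refine ⟨hcmem, ?_⟩
    calc dist (g u) (g c) ≤ dist (g u) (g t') + dist (g t') (g c) := dist_triangle _ _ _
      _ ≤ C * (t' - u) + C * (c - t') := add_le_add ht'S.2 h1
      _ = C * (c - u) := by ring
  have hvc : v ≤ c := by
    by_contra hlt
    push_neg at hlt
    set t'' := min v (c + ε / 2) with ht''def
    have hct'' : c < t'' := lt_min hlt (by linarith)
    have ht''v : t'' ≤ v := min_le_left _ _
    have ht''mem : t'' ∈ Set.Icc u v := ⟨le_trans hcmem.1 hct''.le, ht''v⟩
    have ht''I : t'' ∈ I := hIOC.out hu hv ht''mem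
    have h2 : dist (g c) (g t'') ≤ C * |t'' - c| := by
      apply hgc c hcI t'' ht''I (by simpa using hε)
      rw [abs_of_nonneg (by linarith)]
      have : t'' ≤ c + ε / 2 := min_le_right _ _
      linarith
    rw [abs_of_nonneg (by linarith)] at h2
    have : t'' ∈ S := by
      refine ⟨ht''mem, ?_⟩
      calc dist (g u) (g t'') ≤ dist (g u) (g c) + dist (g c) (g t'') := dist_triangle _ _ _
        _ ≤ C * (c - u) + C * (t'' - c) := add_le_add hcS.2 h2
        _ = C * (t'' - u) := by ring
    exact absurd (le_csSup hSbdd this) (not_le.2 hct'')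
  have : c = v := le_antisymm hcmem.2 hvc
  rw [← this]
  exact hcS.2

/-- In a geodesic metric space, a continuous function whose restrictions to a
countable covering family are uniformly `L`-Lipschitz is `L`-Lipschitz. -/
theorem stmt0 {M N : Type*} [MetricSpace M] [MetricSpace N]
    (hgeo : ∀ x y : M, ∃ γ : ℝ → M, γ 0 = x ∧ γ (dist x y) = y ∧
      ∀ s ∈ Set.Icc (0 : ℝ) (dist x y), ∀ t ∈ Set.Icc (0 : ℝ) (dist x y),
        dist (γ s) (γ t) = |s - t|)
    (Z : ℕ → Set M) (hZ : (⋃ i, Z i) = Set.univ)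
    (f : M → N) (hf : Continuous f) (L : NNReal)
    (hlip : ∀ i, LipschitzOnWith L f (Z i)) :
    LipschitzWith L f := by
  apply LipschitzWith.of_dist_le_mul
  intro x y
  obtain ⟨γ, hγ0, hγD, hiso⟩ := hgeo x y
  set D := dist x y with hD
  have hD0 : (0:ℝ) ≤ D := dist_nonneg
  set I : Set ℝ := Set.Icc 0 D with hIdef
  have hIclosed : IsClosed I := isClosed_Icc
  have hIOC : I.OrdConnected := ordConnected_Icc
  set g : ℝ → N := f ∘ γ with hg
  have hγcont : ContinuousOn γ I := by
    rw [Metric.continuousOn_iff]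
    intro b hb ε hε
    exact ⟨ε, hε, fun a ha hab => by rwa [hiso a ha b hb, ← Real.dist_eq]⟩
  have hgcont : ContinuousOn g I := hf.comp_continuousOn hγcont
  set B : ℕ → Set ℝ := fun i => γ ⁻¹' (Z i) ∩ I with hB
  have hBsub : ∀ i, B i ⊆ I := fun i => inter_subset_right
  have hBcover : ∀ t ∈ I, ∃ i, t ∈ B i := by
    intro t ht
    have h1 : γ t ∈ ⋃ i, Z i := hZ ▸ mem_univ _
    obtain ⟨i, hi⟩ := mem_iUnion.1 h1
    exact ⟨i, hi, ht⟩
  have hBlip : ∀ i, ∀ s ∈ B i, ∀ t ∈ B i, dist (g s) (g t) ≤ (L:ℝ) * |s - t| := by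
    intro i s hs t ht
    calc dist (g s) (g t) = dist (f (γ s)) (f (γ t)) := rfl
      _ ≤ (L:ℝ) * dist (γ s) (γ t) := (hlip i).dist_le_mul (γ s) hs.1 (γ t) ht.1
      _ = (L:ℝ) * |s - t| := by rw [hiso s hs.2 t ht.2]
  have hBclos : ∀ i, ∀ a ∈ closure (B i), ∀ b ∈ closure (B i),
      dist (g a) (g b) ≤ (L:ℝ) * |a - b| := by
    intro i a ha b hb
    have hclI : closure (B i) ⊆ I := closure_minimal (hBsub i) hIclosed
    obtain ⟨ua, hua, hualim⟩ := mem_closure_iff_seq_limit.1 ha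
    obtain ⟨ub, hub, hublim⟩ := mem_closure_iff_seq_limit.1 hb
    have hta : Tendsto (fun n => g (ua n)) atTop (nhds (g a)) :=
      (hgcont a (hclI ha)).tendsto.comp
        (tendsto_nhdsWithin_of_tendsto_nhds_of_eventually_within _ hualim
          (Eventually.of_forall fun n => hBsub i (hua n)))
    have htb : Tendsto (fun n => g (ub n)) atTop (nhds (g b)) :=
      (hgcont b (hclI hb)).tendsto.comp
        (tendsto_nhdsWithin_of_tendsto_nhds_of_eventually_within _ hublim
          (Eventually.of_forall fun n => hBsub i (hub n)))
    have h1 : Tendsto (fun n => dist (g (ua n)) (g (ub n))) atTop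
        (nhds (dist (g a) (g b))) := hta.dist htb
    have h2 : Tendsto (fun n => (L:ℝ) * |ua n - ub n|) atTop (nhds ((L:ℝ) * |a - b|)) :=
      ((hualim.sub hublim).abs).const_mul _
    exact le_of_tendsto_of_tendsto' h1 h2 fun n => hBlip i _ (hua n) _ (hub n)
  -- every point of I is "good": locally L-Lipschitz estimate
  have hgood : ∀ t ∈ I, ∃ ε > 0, ∀ p ∈ I, ∀ q ∈ I,
      |p - t| < ε → |q - t| < ε → dist (g p) (g q) ≤ (L:ℝ) * |q - p| := by
    by_contra hcon
    obtain ⟨t₀, ht₀⟩ := not_forall.1 hcon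
    rw [Classical.not_imp] at ht₀
    obtain ⟨ht₀I, ht₀bad⟩ := ht₀
    set good : ℝ → Prop := fun t => ∃ ε > 0, ∀ p ∈ I, ∀ q ∈ I,
      |p - t| < ε → |q - t| < ε → dist (g p) (g q) ≤ (L:ℝ) * |q - p| with hgooddef
    have hgoodopen : IsOpen {t | good t} := by
      rw [Metric.isOpen_iff]
      rintro t ⟨ε, hε, ht⟩
      refine ⟨ε / 2, by linarith, fun t' ht' => ⟨ε / 2, by linarith,
        fun p hp q hq hpt' hqt' => ?_⟩⟩
      rw [Metric.mem_ball, Real.dist_eq] at ht'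
      refine ht p hp q hq ?_ ?_
      · calc |p - t| ≤ |p - t'| + |t' - t| := abs_sub_le _ _ _
          _ < ε := by linarith
      · calc |q - t| ≤ |q - t'| + |t' - t| := abs_sub_le _ _ _
          _ < ε := by linarith
    set F : Set ℝ := I ∩ {t | good t}ᶜ with hFdef
    have hFclosed : IsClosed F := hIclosed.inter hgoodopen.isClosed_compl
    have hFne : F.Nonempty := ⟨t₀, ht₀I, ht₀bad⟩
    haveI : CompleteSpace F := hFclosed.completeSpace_coe
    haveI : Nonempty F := hFne.to_subtype
    obtain ⟨i, hi⟩ := nonempty_interior_of_iUnion_of_closed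
      (f := fun i => ((↑) : F → ℝ) ⁻¹' closure (B i))
      (fun i => isClosed_closure.preimage continuous_subtype_val)
      (by
        rw [eq_univ_iff_forall]
        intro t
        obtain ⟨j, htj⟩ := hBcover t.1 t.2.1
        exact mem_iUnion.2 ⟨j, subset_closure htj⟩)
    obtain ⟨⟨t₁, ht₁F⟩, ht₁int⟩ := hi
    rw [mem_interior_iff_mem_nhds, Metric.mem_nhds_iff] at ht₁int
    obtain ⟨δ, hδ, hball⟩ := ht₁int
    have hdense : ∀ s, (hs : s ∈ F) → |s - t₁| < δ → s ∈ closure (B i) := by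
      intro s hsF hs
      exact hball (show (⟨s, hsF⟩ : F) ∈ Metric.ball (⟨t₁, ht₁F⟩ : F) δ by
        rw [Metric.mem_ball, Subtype.dist_eq, Real.dist_eq]; exact hs)
    have ht₁I : t₁ ∈ I := ht₁F.1
    apply ht₁F.2
    have main : ∀ p ∈ I, ∀ q ∈ I, |p - t₁| < δ / 2 → |q - t₁| < δ / 2 → p ≤ q →
        dist (g p) (g q) ≤ (L:ℝ) * (q - p) := by
      intro p hp q hq hpt hqt hpq
      obtain ⟨hpt1, hpt2⟩ := abs_sub_lt_iff.1 hpt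
      obtain ⟨hqt1, hqt2⟩ := abs_sub_lt_iff.1 hqt
      by_cases hFs : (F ∩ Set.Icc p q).Nonempty
      · set s := F ∩ Set.Icc p q with hsdef
        have hsc : IsClosed s := hFclosed.inter isClosed_Icc
        have hbddb : BddBelow s := ⟨p, fun t ht => ht.2.1⟩
        have hbdda : BddAbove s := ⟨q, fun t ht => ht.2.2⟩
        set a := sInf s with ha
        set b := sSup s with hb2
        have haF : a ∈ s := hsc.csInf_mem hFs hbddb
        have hbF : b ∈ s := hsc.csSup_mem hFs hbdda
        have hab : a ≤ b := csInf_le_csSup hFs hbddb hbdda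
        have haI : a ∈ I := haF.1.1
        have hbI : b ∈ I := hbF.1.1
        have ha_t₁ : |a - t₁| < δ := by
          rw [abs_sub_lt_iff]
          constructor <;> linarith [haF.2.1, haF.2.2]
        have hb_t₁ : |b - t₁| < δ := by
          rw [abs_sub_lt_iff]
          constructor <;> linarith [hbF.2.1, hbF.2.2]
        have h3 : dist (g a) (g b) ≤ (L:ℝ) * (b - a) := by
          have := hBclos i a (hdense a haF.1 ha_t₁) b (hdense b hbF.1 hb_t₁)
          rwa [abs_sub_comm, abs_of_nonneg (by linarith)] at this
        have h1 : dist (g p) (g a) ≤ (L:ℝ) * (a - p) := by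
          rcases eq_or_lt_of_le haF.2.1 with heq | hlt
          · rw [← heq]; simp
          · have key : ∀ a' ∈ Set.Ico p a, dist (g p) (g a') ≤ (L:ℝ) * (a' - p) := by
              intro a' ha'
              have ha'I : a' ∈ I := hIOC.out hp haI ⟨ha'.1, ha'.2.le⟩
              apply aux_LG hIOC hp ha'I ha'.1
              intro t ht
              have htI : t ∈ I := hIOC.out hp ha'I ht
              by_contra hbad
              have htq : t ≤ q := le_trans ht.2 (le_trans ha'.2.le (le_trans hab hbF.2.2))
              have : a ≤ t := csInf_le hbddb ⟨⟨htI, hbad⟩, ht.1, htq⟩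
              linarith [ht.2, ha'.2]
            haveI hne : (nhdsWithin a (Set.Ico p a)).NeBot := by
              apply mem_closure_iff_nhdsWithin_neBot.1
              rw [closure_Ico (ne_of_lt hlt)]
              exact ⟨hlt.le, le_refl a⟩
            have htend : Tendsto g (nhdsWithin a (Set.Ico p a)) (nhds (g a)) :=
              (hgcont a haI).tendsto.mono_left
                (nhdsWithin_mono a fun z hz => hIOC.out hp haI ⟨hz.1, hz.2.le⟩)
            have hT1 : Tendsto (fun a' => dist (g p) (g a'))
                (nhdsWithin a (Set.Ico p a)) (nhds (dist (g p) (g a))) :=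
              tendsto_const_nhds.dist htend
            have hT2 : Tendsto (fun a' => (L:ℝ) * (a' - p))
                (nhdsWithin a (Set.Ico p a)) (nhds ((L:ℝ) * (a - p))) := by
              apply Tendsto.const_mul
              exact (tendsto_id.sub tendsto_const_nhds).mono_left nhdsWithin_le_nhds
            exact le_of_tendsto_of_tendsto hT1 hT2
              (eventually_mem_nhdsWithin.mono fun a' ha' => key a' ha')
        have h2 : dist (g b) (g q) ≤ (L:ℝ) * (q - b) := by
          rcases eq_or_lt_of_le hbF.2.2 with heq | hlt
          · rw [heq]; simp
          · have key : ∀ b' ∈ Set.Ioc b q, dist (g b') (g q) ≤ (L:ℝ) * (q - b') := by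
              intro b' hb'
              have hb'I : b' ∈ I := hIOC.out hbI hq ⟨hb'.1.le, hb'.2⟩
              apply aux_LG hIOC hb'I hq hb'.2
              intro t ht
              have htI : t ∈ I := hIOC.out hb'I hq ht
              by_contra hbad
              have htp : p ≤ t := le_trans haF.2.1 (le_trans hab (le_trans hb'.1.le ht.1))
              have : t ≤ b := le_csSup hbdda ⟨⟨htI, hbad⟩, htp, ht.2⟩
              linarith [ht.1, hb'.1]
            haveI hne : (nhdsWithin b (Set.Ioc b q)).NeBot := by
              apply mem_closure_iff_nhdsWithin_neBot.1
              rw [closure_Ioc (ne_of_lt hlt)]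
              exact ⟨le_refl b, hlt.le⟩
            have htend : Tendsto g (nhdsWithin b (Set.Ioc b q)) (nhds (g b)) :=
              (hgcont b hbI).tendsto.mono_left
                (nhdsWithin_mono b fun z hz => hIOC.out hbI hq ⟨hz.1.le, hz.2⟩)
            have hT1 : Tendsto (fun b' => dist (g b') (g q))
                (nhdsWithin b (Set.Ioc b q)) (nhds (dist (g b) (g q))) :=
              htend.dist tendsto_const_nhds
            have hT2 : Tendsto (fun b' => (L:ℝ) * (q - b'))
                (nhdsWithin b (Set.Ioc b q)) (nhds ((L:ℝ) * (q - b))) := by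
              apply Tendsto.const_mul
              exact (tendsto_const_nhds.sub tendsto_id).mono_left nhdsWithin_le_nhds
            exact le_of_tendsto_of_tendsto hT1 hT2
              (eventually_mem_nhdsWithin.mono fun b' hb' => key b' hb')
        calc dist (g p) (g q)
            ≤ dist (g p) (g a) + dist (g a) (g b) + dist (g b) (g q) :=
              dist_triangle4 _ _ _ _
          _ ≤ (L:ℝ) * (a - p) + (L:ℝ) * (b - a) + (L:ℝ) * (q - b) := by
              exact add_le_add (add_le_add h1 h3) h2
          _ = (L:ℝ) * (q - p) := by ring
      · apply aux_LG hIOC hp hq hpq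
        intro t ht
        have htI : t ∈ I := hIOC.out hp hq ht
        by_contra hbad
        exact hFs ⟨t, ⟨htI, hbad⟩, ht⟩
    refine ⟨δ / 2, by linarith, fun p hp q hq hpt hqt => ?_⟩
    rcases le_total p q with h | h
    · have := main p hp q hq hpt hqt h
      rwa [abs_of_nonneg (sub_nonneg.2 h)]
    · have := main q hq p hp hqt hpt h
      rwa [dist_comm, show |q - p| = p - q from by
        rw [abs_sub_comm, abs_of_nonneg (sub_nonneg.2 h)]]
  have hfinal := aux_LG hIOC (show (0:ℝ) ∈ I from ⟨le_refl 0, hD0⟩)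
    (show D ∈ I from ⟨hD0, le_refl D⟩) hD0 (fun t ht => hgood t ht)
  calc dist (f x) (f y) = dist (g 0) (g D) := by
        rw [hg]; simp only [Function.comp_apply, hγ0, hγD]
    _ ≤ (L:ℝ) * (D - 0) := hfinal
    _ = (L:ℝ) * D := by ring
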